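/- Consider the closed-loop uncertain SEIR model under the affine feedbacks β̂ and γ̂. The following are equivalent: (i) every uncertain trajectory (S, E, I, η) with (S(t0), E(t0), I(t0)) ∈ G_Π satisfies (S(t), E(t), I(t)) ∈ G_Π for all t ≥ t0 (i.e. the maximal robust positively invariant set of the closed-loop system equals G_Π); (ii) η_max (1 − I_max) ≤ γ_max I_max. -/

import Mathlib

set_option maxHeartbeats 2000000

open Set Filter Topology

section Helpers

/-- At a first touch of zero from above (on the left), the derivative is nonpositive. -/
lemma slope_nonpos_at_first_zero {φ : ℝ → ℝ} {d τ a : ℝ} (hd : HasDerivAt φ d τ)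
    (ha : a < τ) (h0 : φ τ = 0) (hpos : ∀ s, a ≤ s → s < τ → 0 ≤ φ s) : d ≤ 0 := by
  have hslope := hasDerivAt_iff_tendsto_slope.mp hd
  have h1 : Tendsto (slope φ τ) (𝓝[<] τ) (𝓝 d) :=
    hslope.mono_left (nhdsWithin_mono τ (fun x hx => ne_of_lt hx))
  refine le_of_tendsto h1 ?_
  filter_upwards [Ioo_mem_nhdsLT_of_mem ⟨ha, le_refl τ⟩] with s hs
  have h2 : 0 ≤ φ s := hpos s hs.1.le hs.2
  rw [slope_def_field, h0, div_nonpos_iff]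
  exact Or.inl ⟨by linarith, by linarith [hs.2]⟩

/-- If a function is everywhere below its initial value on the right, its derivative there is
nonpositive. -/
lemma slope_nonpos_right {f : ℝ → ℝ} {d τ : ℝ} (hd : HasDerivAt f d τ)
    (hle : ∀ s, τ ≤ s → f s ≤ f τ) : d ≤ 0 := by
  have hslope := hasDerivAt_iff_tendsto_slope.mp hd
  have h1 : Tendsto (slope f τ) (𝓝[>] τ) (𝓝 d) :=
    hslope.mono_left (nhdsWithin_mono τ (fun x hx => ne_of_gt hx))
  refine le_of_tendsto h1 ?_
  filter_upwards [Ioo_mem_nhdsGT_of_mem ⟨le_refl τ, lt_add_one τ⟩] with s hs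
  rw [slope_def_field, div_nonpos_iff]
  exact Or.inr ⟨by linarith [hle s hs.1.le], by linarith [hs.1]⟩

/-- Joint barrier lemma: finitely many continuous functions, positive at `t0`, such that at any
joint "first touch" of zero the touching function has strictly positive derivative, stay
positive on `[t0, T]`. -/
lemma barrier_pos_fin {n : ℕ} (φ : Fin n → ℝ → ℝ) {t0 T : ℝ}
    (hc : ∀ i, Continuous (φ i)) (h0 : ∀ i, 0 < φ i t0)
    (hkey : ∀ i τ, t0 < τ → τ ≤ T → φ i τ = 0 →
      (∀ j s, t0 ≤ s → s < τ → 0 < φ j s) → (∀ j, 0 ≤ φ j τ) →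
      ∃ d, HasDerivAt (φ i) d τ ∧ 0 < d) :
    ∀ i s, t0 ≤ s → s ≤ T → 0 < φ i s := by
  by_contra hcon
  push_neg at hcon
  obtain ⟨i0, u, hu1, hu2, hu3⟩ := hcon
  set B := Icc t0 T ∩ (⋃ i, {s | φ i s ≤ 0}) with hBdef
  have hne : B.Nonempty := ⟨u, ⟨hu1, hu2⟩, mem_iUnion.2 ⟨i0, hu3⟩⟩
  have hclosed : IsClosed B :=
    isClosed_Icc.inter (isClosed_iUnion_of_finite fun i => isClosed_le (hc i) continuous_const)
  have hbdd : BddBelow B := ⟨t0, fun s hs => hs.1.1⟩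
  set τ := sInf B with hτdef
  have hτB : τ ∈ B := hclosed.csInf_mem hne hbdd
  have hτ1 : t0 ≤ τ := hτB.1.1
  have hτ2 : τ ≤ T := hτB.1.2
  obtain ⟨i, hφτ⟩ : ∃ i, φ i τ ≤ 0 := by
    obtain ⟨_, ⟨j, rfl⟩, h⟩ := hτB.2
    exact ⟨j, h⟩
  have hlt : ∀ j s, t0 ≤ s → s < τ → 0 < φ j s := by
    intro j s hs1 hs2
    by_contra hns
    push_neg at hns
    exact absurd (csInf_le hbdd ⟨⟨hs1, hs2.le.trans hτ2⟩, mem_iUnion.2 ⟨j, hns⟩⟩)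
      (not_le.2 hs2)
  have ht0τ : t0 < τ := by
    rcases eq_or_lt_of_le hτ1 with h | h
    · exact absurd hφτ (not_le.2 (h ▸ h0 i))
    · exact h
  have hge : ∀ j, 0 ≤ φ j τ := by
    intro j
    have hcontj : Tendsto (φ j) (𝓝[<] τ) (𝓝 (φ j τ)) :=
      ((hc j).tendsto τ).mono_left nhdsWithin_le_nhds
    refine ge_of_tendsto hcontj ?_
    filter_upwards [Ioo_mem_nhdsLT_of_mem ⟨ht0τ, le_refl τ⟩] with s hs
    exact (hlt j s hs.1.le hs.2).le
  have hφ0 : φ i τ = 0 := le_antisymm hφτ (hge i)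
  obtain ⟨d, hd, hdpos⟩ := hkey i τ ht0τ hτ2 hφ0 hlt hge
  have := slope_nonpos_at_first_zero hd ht0τ hφ0 (fun s h1 h2 => (hlt i s h1 h2).le)
  linarith

/-- Single-function barrier lemma. -/
lemma barrier_pos1 (φ : ℝ → ℝ) {t0 T : ℝ} (hc : Continuous φ) (h0 : 0 < φ t0)
    (hkey : ∀ τ, t0 < τ → τ ≤ T → φ τ = 0 → (∀ s, t0 ≤ s → s < τ → 0 < φ s) →
      ∃ d, HasDerivAt φ d τ ∧ 0 < d) :
    ∀ s, t0 ≤ s → s ≤ T → 0 < φ s := by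
  have := barrier_pos_fin (fun _ : Fin 1 => φ) (fun _ => hc) (fun _ => h0)
    (fun _ τ h1 h2 h3 h4 _ => hkey τ h1 h2 h3 (fun s a b => h4 0 s a b))
  exact fun s a b => this 0 s a b


/-- Five-function joint barrier lemma. -/
lemma barrier_pos5 (f0 f1 f2 f3 f4 : ℝ → ℝ) {t0 T : ℝ}
    (hc0 : Continuous f0) (hc1 : Continuous f1) (hc2 : Continuous f2)
    (hc3 : Continuous f3) (hc4 : Continuous f4)
    (h00 : 0 < f0 t0) (h01 : 0 < f1 t0) (h02 : 0 < f2 t0) (h03 : 0 < f3 t0) (h04 : 0 < f4 t0)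
    (hkey0 : ∀ τ, t0 < τ → τ ≤ T → f0 τ = 0 → 0 ≤ f0 τ → 0 ≤ f1 τ → 0 ≤ f2 τ → 0 ≤ f3 τ →
      0 ≤ f4 τ → ∃ d, HasDerivAt f0 d τ ∧ 0 < d)
    (hkey1 : ∀ τ, t0 < τ → τ ≤ T → f1 τ = 0 → 0 ≤ f0 τ → 0 ≤ f1 τ → 0 ≤ f2 τ → 0 ≤ f3 τ →
      0 ≤ f4 τ → ∃ d, HasDerivAt f1 d τ ∧ 0 < d)
    (hkey2 : ∀ τ, t0 < τ → τ ≤ T → f2 τ = 0 → 0 ≤ f0 τ → 0 ≤ f1 τ → 0 ≤ f2 τ → 0 ≤ f3 τ →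
      0 ≤ f4 τ → ∃ d, HasDerivAt f2 d τ ∧ 0 < d)
    (hkey3 : ∀ τ, t0 < τ → τ ≤ T → f3 τ = 0 → 0 ≤ f0 τ → 0 ≤ f1 τ → 0 ≤ f2 τ → 0 ≤ f3 τ →
      0 ≤ f4 τ → ∃ d, HasDerivAt f3 d τ ∧ 0 < d)
    (hkey4 : ∀ τ, t0 < τ → τ ≤ T → f4 τ = 0 → 0 ≤ f0 τ → 0 ≤ f1 τ → 0 ≤ f2 τ → 0 ≤ f3 τ →
      0 ≤ f4 τ → ∃ d, HasDerivAt f4 d τ ∧ 0 < d) :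
    ∀ s, t0 ≤ s → s ≤ T →
      0 < f0 s ∧ 0 < f1 s ∧ 0 < f2 s ∧ 0 < f3 s ∧ 0 < f4 s := by
  have main := barrier_pos_fin (n := 5) (t0 := t0) (T := T) ![f0, f1, f2, f3, f4] ?_ ?_ ?_
  · intro s h1 h2
    exact ⟨main 0 s h1 h2, main 1 s h1 h2, main 2 s h1 h2, main 3 s h1 h2, main 4 s h1 h2⟩
  · intro i
    fin_cases i <;> assumption
  · intro i
    fin_cases i <;> assumption
  · intro i τ h1 h2 h3 h4 h5
    have e0 : 0 ≤ f0 τ := h5 0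
    have e1 : 0 ≤ f1 τ := h5 1
    have e2 : 0 ≤ f2 τ := h5 2
    have e3 : 0 ≤ f3 τ := h5 3
    have e4 : 0 ≤ f4 τ := h5 4
    fin_cases i
    · exact hkey0 τ h1 h2 h3 e0 e1 e2 e3 e4
    · exact hkey1 τ h1 h2 h3 e0 e1 e2 e3 e4
    · exact hkey2 τ h1 h2 h3 e0 e1 e2 e3 e4
    · exact hkey3 τ h1 h2 h3 e0 e1 e2 e3 e4
    · exact hkey4 τ h1 h2 h3 e0 e1 e2 e3 e4

/-- Global existence for a scalar ODE with globally bounded, globally Lipschitz,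
continuous right-hand side. -/
lemma global_ode_exists (F : ℝ → ℝ → ℝ) (L : NNReal) (C : ℝ) (hC : 0 ≤ C)
    (hlip : ∀ t, LipschitzWith L (F t)) (hcont : ∀ x, Continuous fun t => F t x)
    (hbdd : ∀ t x, ‖F t x‖ ≤ C) (t₀ x₀ : ℝ) :
    ∃ f : ℝ → ℝ, f t₀ = x₀ ∧ ∀ t, HasDerivAt f (F t (f t)) t := by
  have sol : ∀ n : ℕ, ∃ f : ℝ → ℝ, f t₀ = x₀ ∧
      ∀ s ∈ Icc (t₀ - (n + 1)) (t₀ + (n + 1)),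
        HasDerivWithinAt f (F s (f s)) (Icc (t₀ - (n + 1)) (t₀ + (n + 1))) s := by
    intro n
    have hn1 : (0:ℝ) ≤ n + 1 := by positivity
    have hpl : IsPicardLindelof F (tmin := t₀ - (n + 1)) (tmax := t₀ + (n + 1))
        ⟨t₀, by constructor <;> linarith⟩ x₀ ⟨C * (n + 1), by positivity⟩ 0 ⟨C, hC⟩ L :=
      { lipschitzOnWith := fun t _ => (hlip t).lipschitzOnWith
        continuousOn := fun x _ => (hcont x).continuousOn
        norm_le := fun t _ x _ => hbdd t x
        mul_max_le := by
          have e1 : t₀ + ((n:ℝ) + 1) - t₀ = (n:ℝ) + 1 := by ring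
          have e2 : t₀ - (t₀ - ((n:ℝ) + 1)) = (n:ℝ) + 1 := by ring
          simp only [NNReal.coe_mk, NNReal.coe_zero, sub_zero]
          rw [e1, e2, max_self]
          exact le_rfl }
    exact hpl.exists_eq_forall_mem_Icc_hasDerivWithinAt₀
  choose g hg0 hgd using sol
  have hDadd : ∀ (n : ℕ) (s : ℝ), |s - t₀| < n + 1 → HasDerivAt (g n) (F s (g n s)) s := by
    intro n s hs
    rw [abs_lt] at hs
    exact (hgd n s ⟨by linarith [hs.1], by linarith [hs.2]⟩).hasDerivAt
      (Icc_mem_nhds (by linarith [hs.1]) (by linarith [hs.2]))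
  have huniq : ∀ (m n : ℕ) (s : ℝ), |s - t₀| < m + 1 → |s - t₀| < n + 1 → g m s = g n s := by
    intro m n s hm hn
    set r : ℝ := min (m + 1) (n + 1) with hr
    have hr0 : (0:ℝ) < r := lt_min (by positivity) (by positivity)
    have key : ∀ k : ℕ, (r:ℝ) ≤ k + 1 →
        ∀ u ∈ Ioo (t₀ - r) (t₀ + r), HasDerivAt (g k) (F u (g k u)) u := by
      intro k hk u hu
      refine hDadd k u ?_
      rw [abs_lt]
      constructor
      · linarith [hu.1]
      · linarith [hu.2]
    have := ODE_solution_unique_of_mem_Ioo (K := L) (v := F) (s := fun _ => (univ : Set ℝ))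
      (f := g m) (g := g n) (t₀ := t₀) (a := t₀ - r) (b := t₀ + r)
      (fun t _ => (hlip t).lipschitzOnWith.mono (subset_univ _))
      ⟨by linarith, by linarith⟩
      (fun u hu => ⟨key m (min_le_left _ _) u hu, trivial⟩)
      (fun u hu => ⟨key n (min_le_right _ _) u hu, trivial⟩)
      (by rw [hg0 m, hg0 n])
    exact this ⟨by have := abs_lt.mp (lt_min hm hn); linarith [this.1],
      by have := abs_lt.mp (lt_min hm hn); linarith [this.2]⟩
  refine ⟨fun s => g ⌈|s - t₀|⌉₊ s, ?_, ?_⟩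
  · simp only [sub_self, abs_zero, Nat.ceil_zero]
    exact hg0 0
  · intro s
    set n := ⌈|s - t₀|⌉₊ with hn
    have hmem : ∀ u : ℝ, |u - t₀| < (⌈|u - t₀|⌉₊ : ℝ) + 1 :=
      fun u => lt_of_le_of_lt (Nat.le_ceil _) (by linarith)
    have hUopen : IsOpen {u : ℝ | |u - t₀| < n + 1} := by
      have : Continuous fun u : ℝ => |u - t₀| := (continuous_id.sub continuous_const).abs
      exact isOpen_lt this continuous_const
    have hsU : s ∈ {u : ℝ | |u - t₀| < n + 1} := hmem s
    have hloc : (fun u => g ⌈|u - t₀|⌉₊ u) =ᶠ[𝓝 s] g n := by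
      filter_upwards [hUopen.mem_nhds hsU] with u hu
      exact huniq ⌈|u - t₀|⌉₊ n u (hmem u) hu
    exact (hDadd n s (hmem s)).congr_of_eventuallyEq hloc

end Helpers


section ArithHelpers

lemma arith_haL {βmin βmax Δβ Imax Ca u v : ℝ} (hβmin : 0 < βmin) (hΔβ0 : 0 ≤ Δβ)
    (hΔβI : Δβ * Imax = βmax - βmin) (hCa : Ca = βmin + Δβ * Imax + Δβ)
    (h1 : -v ≤ u) (h2 : u ≤ Imax + v) (h3 : 0 < v) (h4 : v ≤ 1) :
    -(Ca * v) ≤ βmax * u - Δβ * u ^ 2 := by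
  subst hCa
  nlinarith [mul_nonneg (mul_nonneg hΔβ0 (by linarith : (0:ℝ) ≤ u + v))
      (by linarith : (0:ℝ) ≤ Imax + v - u),
    mul_nonneg hβmin.le (by linarith : (0:ℝ) ≤ u + v),
    mul_nonneg (mul_nonneg hΔβ0 h3.le) (by linarith : (0:ℝ) ≤ 1 - v)]

lemma arith_haU {βmax Δβ Imax Ka u : ℝ} (hβmax : 0 ≤ βmax) (hΔβ0 : 0 ≤ Δβ)
    (hKa : Ka = βmax * (Imax + 1)) (h1 : u ≤ Imax + 1) :
    βmax * u - Δβ * u ^ 2 ≤ Ka := by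
  subst hKa
  nlinarith [mul_nonneg hΔβ0 (sq_nonneg u)]

lemma arith_case0 {L Ca a w : ℝ} (hCa : 0 ≤ Ca) (hL : Ca + 1 ≤ L)
    (ha : -(Ca * w) ≤ a) (hw : 0 < w) (hw1 : w ≤ 1) :
    0 < -(a * -w) + w * L := by
  nlinarith [mul_le_mul_of_nonneg_right ha hw.le,
    mul_nonneg (mul_nonneg hCa hw.le) (by linarith : (0:ℝ) ≤ 1 - w)]

lemma arith_prod {Ka Ca a S w : ℝ} (hKa : 0 < Ka) (hCa : 0 ≤ Ca)
    (haL : -(Ca * w) ≤ a) (haU : a ≤ Ka) (hSlo : -w ≤ S) (hSup : S ≤ 4) (hw : 0 < w) :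
    -(Ka * w + Ca * w * 4) ≤ a * S := by
  rcases le_or_gt 0 a with hc | hc
  · nlinarith [mul_nonneg hc (by linarith : (0:ℝ) ≤ S + w),
      mul_le_mul_of_nonneg_right haU hw.le, mul_nonneg hCa hw.le,
      mul_nonneg (mul_nonneg hCa hw.le) hw.le]
  · nlinarith [mul_nonneg (by linarith : (0:ℝ) ≤ -a) (by linarith : (0:ℝ) ≤ 4 - S),
      mul_nonneg hKa.le hw.le]

lemma arith_case1 {L Ka Ca a S ηv w : ℝ} (hKa : 0 < Ka) (hCa : 0 ≤ Ca)
    (hL : Ka + Ca * 4 + 1 ≤ L) (haL : -(Ca * w) ≤ a) (haU : a ≤ Ka)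
    (hSlo : -w ≤ S) (hSup : S ≤ 4) (hη : 0 ≤ ηv) (hw : 0 < w) (hw1 : w ≤ 1) :
    0 < a * S - ηv * -w + w * L := by
  have h1 := arith_prod hKa hCa haL haU hSlo hSup hw
  nlinarith [mul_nonneg hη hw.le]

lemma arith_etaE_low {ηmax ηv Ev w : ℝ} (hη1 : 0 < ηv) (hη2 : ηv ≤ ηmax)
    (hE : -w ≤ Ev) (hw : 0 < w) : -(ηmax * w) ≤ ηv * Ev := by
  rcases le_or_gt 0 Ev with hc | hc
  · nlinarith [mul_nonneg hη1.le hc, mul_nonneg (hη1.trans_le hη2).le hw.le]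
  · nlinarith [mul_nonneg (by linarith : (0:ℝ) ≤ ηmax - ηv) (by linarith : (0:ℝ) ≤ -Ev)]

lemma arith_case2 {L ηmax κ γmin ηv Ev w : ℝ} (hκ : 0 ≤ κ) (hγmin : 0 ≤ γmin)
    (hηmax : 0 < ηmax) (hL : ηmax + κ + 1 ≤ L) (hη1 : 0 < ηv) (hη2 : ηv ≤ ηmax)
    (hE : -w ≤ Ev) (hw : 0 < w) (hw1 : w ≤ 1) :
    0 < ηv * Ev - (γmin + κ * -w) * -w + w * L := by
  have h1 := arith_etaE_low hη1 hη2 hE hw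
  nlinarith [mul_nonneg (mul_nonneg hκ hw.le) (by linarith : (0:ℝ) ≤ 1 - w),
    mul_nonneg hγmin hw.le]

lemma arith_case3 {L κ γmin Iv w : ℝ} (hκ : 0 ≤ κ) (hγmin : 0 ≤ γmin)
    (hL : γmin + 1 ≤ L) (hI : -w ≤ Iv) (hw : 0 < w) :
    0 < w * L + (γmin + κ * Iv) * Iv := by
  nlinarith [mul_nonneg hκ (sq_nonneg Iv), mul_nonneg hγmin hw.le]

lemma arith_etaE_up {ηmax ηv Ev X : ℝ} (hη1 : 0 < ηv) (hη2 : ηv ≤ ηmax)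
    (hE : Ev ≤ X) (hX : 0 ≤ X) : ηv * Ev ≤ ηmax * X := by
  rcases le_or_gt 0 Ev with hc | hc
  · nlinarith [mul_nonneg (by linarith : (0:ℝ) ≤ ηmax - ηv) hc]
  · nlinarith [mul_nonneg hη1.le (by linarith : (0:ℝ) ≤ -Ev),
      mul_nonneg (hη1.trans_le hη2).le hX]

lemma arith_gI4 {κ γmin γmax Imax w : ℝ} (hκ : 0 ≤ κ) (hγmin : 0 ≤ γmin)
    (hκI : κ * Imax = γmax - γmin) (hI0 : 0 < Imax) (hw : 0 < w) :
    γmax * Imax + γmin * w ≤ (γmin + κ * (Imax + w)) * (Imax + w) := by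
  nlinarith [mul_nonneg hκ (mul_nonneg hw.le hw.le),
    mul_nonneg (mul_nonneg hκ hw.le) hI0.le]

lemma arith_case4 {L ηmax γmin γmax κ Imax ηv Ev w : ℝ} (hκ : 0 ≤ κ) (hγmin : 0 ≤ γmin)
    (hηmax : 0 < ηmax) (hL : ηmax + 1 ≤ L) (hineq : ηmax * (1 - Imax) ≤ γmax * Imax)
    (hκI : κ * Imax = γmax - γmin) (hI0 : 0 < Imax) (hImax1 : Imax < 1)
    (hη1 : 0 < ηv) (hη2 : ηv ≤ ηmax) (hEup : Ev ≤ 1 - Imax + w) (hw : 0 < w) :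
    0 < w * L - (ηv * Ev - (γmin + κ * (Imax + w)) * (Imax + w)) := by
  have h1 : ηv * Ev ≤ ηmax * (1 - Imax + w) :=
    arith_etaE_up hη1 hη2 hEup (by linarith)
  have h2 := arith_gI4 hκ hγmin hκI hI0 hw
  nlinarith [mul_nonneg hγmin hw.le]

end ArithHelpers

/-- The constraint set `G_Π` for the SEIR model:
`{(S, E, I) : S ≥ 0, E ≥ 0, I ≥ 0, S + E + I ≤ 1, I ≤ I_max}`. -/
def GPiSEIR (Imax : ℝ) : Set (ℝ × ℝ × ℝ) :=
  {p | 0 ≤ p.1 ∧ 0 ≤ p.2.1 ∧ 0 ≤ p.2.2 ∧ p.1 + p.2.1 + p.2.2 ≤ 1 ∧ p.2.2 ≤ Imax}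

/-- The affine feedback `β̂(I) = β_min (I/I_max) + β_max (1 − I/I_max)`. -/
noncomputable def betaHat (βmin βmax Imax i : ℝ) : ℝ :=
  βmin * (i / Imax) + βmax * (1 - i / Imax)

/-- The affine feedback `γ̂(I) = γ_min (1 − I/I_max) + γ_max (I/I_max)`. -/
noncomputable def gammaHat (γmin γmax Imax i : ℝ) : ℝ :=
  γmin * (1 - i / Imax) + γmax * (i / Imax)

/-- The MRPI of the closed-loop uncertain SEIR model under the affine feedbacks
`β̂`, `γ̂` equals `G_Π` iff `η_max (1 − I_max) ≤ γ_max I_max`. -/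
theorem seir_imperfect_mrpi_eq_GPi_iff
    (βmin βmax γmin γmax ηmin ηmax Imax t0 : ℝ)
    (hβmin : 0 < βmin) (hβ : βmin ≤ βmax)
    (hγmin : 0 < γmin) (hγ : γmin ≤ γmax)
    (hηmin : 0 < ηmin) (hη : ηmin ≤ ηmax)
    (hI0 : 0 < Imax) (hI1 : Imax < 1) :
    (∀ S E I η : ℝ → ℝ,
        Differentiable ℝ S → Differentiable ℝ E → Differentiable ℝ I →
        (∀ t, t0 ≤ t → η t ∈ Set.Icc ηmin ηmax) →
        (∀ t, t0 ≤ t →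
          HasDerivAt S (-(betaHat βmin βmax Imax (I t) * S t * I t)) t) →
        (∀ t, t0 ≤ t →
          HasDerivAt E (betaHat βmin βmax Imax (I t) * S t * I t - η t * E t) t) →
        (∀ t, t0 ≤ t →
          HasDerivAt I (η t * E t - gammaHat γmin γmax Imax (I t) * I t) t) →
        (S t0, E t0, I t0) ∈ GPiSEIR Imax →
        ∀ t, t0 ≤ t → (S t, E t, I t) ∈ GPiSEIR Imax)
      ↔ ηmax * (1 - Imax) ≤ γmax * Imax := by
  have hηmax0 : 0 < ηmax := lt_of_lt_of_le hηmin hη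
  constructor
  · -- necessity
    intro H
    by_contra hcon
    push_neg at hcon
    -- hcon : γmax * Imax < ηmax * (1 - Imax)
    have h1m : (0:ℝ) < 1 - Imax := by linarith
    set κ : ℝ := (γmax - γmin) / Imax with hκdef
    have hκ0 : 0 ≤ κ := div_nonneg (by linarith) hI0.le
    set M : ℝ := ηmax * (1 - Imax) / γmin + Imax + 1 with hMdef
    have hq0 : 0 ≤ ηmax * (1 - Imax) / γmin := div_nonneg (by nlinarith) hγmin.le
    have hM0 : 0 < M := by rw [hMdef]; linarith
    have hMIm : Imax < M := by rw [hMdef]; linarith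
    set P : ℝ → ℝ := fun x => max 0 (min x M) with hPdef
    have hP0 : ∀ x, 0 ≤ P x := fun x => le_max_left 0 _
    have hPM : ∀ x, P x ≤ M := fun x => max_le hM0.le (min_le_right _ _)
    have hPlip : ∀ x y, |P x - P y| ≤ |x - y| := by
      intro x y
      have h1 : |P x - P y| ≤ |min x M - min y M| := by
        simpa [max_comm] using abs_max_sub_max_le_abs (min x M) (min y M) 0
      have h2 : |min x M - min y M| ≤ max |x - y| |M - M| := abs_min_sub_min_le_max x M y M
      simpa using h1.trans h2
    set e : ℝ → ℝ := fun s => (1 - Imax) * Real.exp (-(ηmax * (s - t0))) with hedef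
    have he_pos : ∀ s, 0 < e s := fun s => mul_pos h1m (Real.exp_pos _)
    have he_le : ∀ s, t0 ≤ s → e s ≤ 1 - Imax := by
      intro s hs
      have h1 : Real.exp (-(ηmax * (s - t0))) ≤ 1 := by
        rw [Real.exp_le_one_iff]
        nlinarith
      have h2 : e s = (1 - Imax) * Real.exp (-(ηmax * (s - t0))) := by rw [hedef]
      rw [h2]
      nlinarith [Real.exp_pos (-(ηmax * (s - t0)))]
    have he_deriv : ∀ s, HasDerivAt e (-ηmax * e s) s := by
      intro s
      have h1 : HasDerivAt (fun u : ℝ => -(ηmax * (u - t0))) (-ηmax) s := by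
        exact (((hasDerivAt_id s).sub_const t0).const_mul ηmax).neg.congr_deriv (by simp)
      have h2 := (h1.exp).const_mul (1 - Imax)
      refine h2.congr_deriv ?_
      rw [hedef]
      ring
    have he_cont : Continuous e := by
      rw [hedef]
      exact continuous_const.mul (Real.continuous_exp.comp
        ((continuous_const.mul (continuous_id.sub continuous_const)).neg))
    set F : ℝ → ℝ → ℝ := fun s x => ηmax * e (max s t0) - (γmin + κ * P x) * P x with hFdef
    set C : ℝ := ηmax * (1 - Imax) + (γmin + κ * M) * M with hCdef
    have hC0 : 0 ≤ C := by
      rw [hCdef]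
      nlinarith [mul_nonneg hκ0 hM0.le, mul_pos hηmax0 h1m]
    have hbdd : ∀ s x, ‖F s x‖ ≤ C := by
      intro s x
      have hFeq : F s x = ηmax * e (max s t0) - (γmin + κ * P x) * P x := by rw [hFdef]
      have h1 : 0 < e (max s t0) := he_pos _
      have h2 : e (max s t0) ≤ 1 - Imax := he_le _ (le_max_right _ _)
      have h30 : (0:ℝ) ≤ γmin + κ * P x := by
        nlinarith [hP0 x, mul_nonneg hκ0 (hP0 x)]
      have h3 : 0 ≤ (γmin + κ * P x) * P x := mul_nonneg h30 (hP0 x)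
      have h4 : (γmin + κ * P x) * P x ≤ (γmin + κ * M) * M := by
        nlinarith [hP0 x, hPM x, mul_nonneg hκ0 (hP0 x),
          mul_nonneg (mul_nonneg hκ0 (sub_nonneg.2 (hPM x))) hM0.le,
          mul_nonneg h30 (sub_nonneg.2 (hPM x))]
      rw [Real.norm_eq_abs, abs_le, hFeq, hCdef]
      constructor
      · nlinarith [mul_pos hηmax0 h1]
      · nlinarith [mul_le_mul_of_nonneg_left h2 hηmax0.le]
    set Lc : ℝ := γmin + 2 * κ * M with hLcdef
    have hLc0 : 0 ≤ Lc := by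
      rw [hLcdef]
      nlinarith [mul_nonneg hκ0 hM0.le]
    have hlip : ∀ s, LipschitzWith ⟨Lc, hLc0⟩ (F s) := by
      intro s
      refine LipschitzWith.of_dist_le_mul fun x y => ?_
      rw [Real.dist_eq, Real.dist_eq]
      show |F s x - F s y| ≤ Lc * |x - y|
      have key : F s x - F s y = -((P x - P y) * (γmin + κ * (P x + P y))) := by
        simp only [hFdef]
        ring
      rw [key, abs_neg, abs_mul]
      have h1 : |γmin + κ * (P x + P y)| ≤ Lc := by
        have hnn : (0:ℝ) ≤ γmin + κ * (P x + P y) := by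
          nlinarith [hP0 x, hP0 y, mul_nonneg hκ0 (add_nonneg (hP0 x) (hP0 y))]
        rw [abs_of_nonneg hnn, hLcdef]
        nlinarith [hPM x, hPM y, hP0 x, hP0 y,
          mul_nonneg hκ0 (sub_nonneg.2 (hPM x)), mul_nonneg hκ0 (sub_nonneg.2 (hPM y))]
      exact (mul_le_mul (hPlip x y) h1 (abs_nonneg _) (abs_nonneg _)).trans_eq (mul_comm _ _)
    have hcontF : ∀ x, Continuous fun s => F s x := by
      intro x
      have hx : (fun s => F s x) = fun s => ηmax * e (max s t0) - (γmin + κ * P x) * P x := by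
        funext s
        rw [hFdef]
      rw [hx]
      exact (continuous_const.mul (he_cont.comp (continuous_id.max continuous_const))).sub
        continuous_const
    obtain ⟨f, hf0, hfd⟩ := global_ode_exists F ⟨Lc, hLc0⟩ C hC0 hlip hcontF hbdd t0 Imax
    have hfdiff : Differentiable ℝ f := fun s => (hfd s).differentiableAt
    have hfc : Continuous f := hfdiff.continuous
    have hP0eq : P 0 = 0 := by
      rw [hPdef]
      simp [min_eq_left hM0.le]
    have hPMeq : P M = M := by
      rw [hPdef]
      simp [max_eq_right hM0.le]
    have hflow : ∀ s, t0 ≤ s → 0 < f s := by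
      intro s hs
      refine barrier_pos1 f hfc (by rw [hf0]; exact hI0) ?_ s hs le_rfl
      intro τ hτ1 hτ2 hτ0 hprev
      refine ⟨F τ (f τ), hfd τ, ?_⟩
      rw [hτ0]
      have hFτ : F τ 0 = ηmax * e (max τ t0) := by
        simp only [hFdef, hP0eq, mul_zero, sub_zero]
      rw [hFτ]
      exact mul_pos hηmax0 (he_pos _)
    have hγM : γmin * M = ηmax * (1 - Imax) + γmin * (Imax + 1) := by
      rw [hMdef]
      field_simp
      ring
    have hfup : ∀ s, t0 ≤ s → f s < M := by
      intro s hs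
      have hkey : ∀ τ, t0 < τ → τ ≤ s → M - f τ = 0 → (∀ u, t0 ≤ u → u < τ → 0 < M - f u) →
          ∃ d, HasDerivAt (fun u => M - f u) d τ ∧ 0 < d := by
        intro τ hτ1 hτ2 hτ0 hprev
        have hfτ : f τ = M := by linarith
        refine ⟨0 - F τ (f τ), (hasDerivAt_const τ M).sub (hfd τ), ?_⟩
        have hFval : F τ (f τ) = ηmax * e (max τ t0) - (γmin + κ * M) * M := by
          rw [hfτ]
          simp only [hFdef, hPMeq]
        rw [hFval]
        have h2 := he_le (max τ t0) (le_max_right _ _)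
        nlinarith [he_pos (max τ t0), mul_le_mul_of_nonneg_left h2 hηmax0.le,
          mul_nonneg hκ0 (mul_nonneg hM0.le hM0.le), mul_pos hγmin hI0]
      have := barrier_pos1 (fun u => M - f u) (continuous_const.sub hfc)
        (by show (0:ℝ) < M - f t0; rw [hf0]; linarith) hkey s hs le_rfl
      have h2 : 0 < M - f s := this
      linarith
    have hPf : ∀ s, t0 ≤ s → P (f s) = f s := by
      intro s hs
      rw [hPdef]
      simp [min_eq_left (hfup s hs).le, max_eq_right (hflow s hs).le]
    have hgam : ∀ x, gammaHat γmin γmax Imax x * x = (γmin + κ * x) * x := by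
      intro x
      unfold gammaHat
      rw [hκdef]
      ring
    have het0 : e t0 = 1 - Imax := by
      rw [hedef]
      simp
    have hFf : ∀ t, t0 ≤ t → F t (f t) = ηmax * e t - gammaHat γmin γmax Imax (f t) * f t := by
      intro t ht
      simp only [hFdef]
      rw [hPf t ht, max_eq_left ht, hgam (f t)]
    have happ := H (fun _ => 0) e f (fun _ => ηmax)
      (differentiable_const 0) (fun s => (he_deriv s).differentiableAt) hfdiff
      (fun t ht => ⟨hη, le_rfl⟩)
      (fun t ht => by
        have h := hasDerivAt_const t (0:ℝ)
        refine h.congr_deriv ?_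
        ring)
      (fun t ht => by
        convert he_deriv t using 1
        ring)
      (fun t ht => by
        convert hfd t using 1
        rw [hFf t ht])
      (by
        have hpt : ((fun _ : ℝ => (0:ℝ)) t0, e t0, f t0) = (0, 1 - Imax, Imax) := by
          rw [het0, hf0]
        rw [hpt]
        exact ⟨le_rfl, by show (0:ℝ) ≤ 1 - Imax; linarith,
          by show (0:ℝ) ≤ Imax; linarith,
          by show (0:ℝ) + (1 - Imax) + Imax ≤ 1; linarith, le_rfl⟩)
    have h3 : P Imax = Imax := by
      rw [hPdef]
      simp [min_eq_left hMIm.le, max_eq_right hI0.le]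
    have h4 : (γmin + κ * Imax) * Imax = γmax * Imax := by
      rw [hκdef]
      have : (γmax - γmin) / Imax * Imax = γmax - γmin := div_mul_cancel₀ _ (ne_of_gt hI0)
      rw [add_mul, this]
      ring
    have hδ : HasDerivAt f (ηmax * (1 - Imax) - γmax * Imax) t0 := by
      have h5 : F t0 (f t0) = ηmax * (1 - Imax) - γmax * Imax := by
        rw [hf0]
        simp only [hFdef]
        rw [max_self, het0, h3, h4]
      have h6 := hfd t0
      rwa [h5] at h6
    have hle : ∀ s, t0 ≤ s → f s ≤ f t0 := by
      intro s hs
      rw [hf0]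
      exact (happ s hs).2.2.2.2
    have := slope_nonpos_right hδ hle
    linarith
  · -- sufficiency (invariance)
    intro hineq S E I η hSd hEd hId hηmem hS hE hI hmem0 t ht
    obtain ⟨hS0, hE0, hI0m, hsum0, hImax0⟩ := hmem0
    have hSc : Continuous S := hSd.continuous
    have hEc : Continuous E := hEd.continuous
    have hIc : Continuous I := hId.continuous
    set Δβ : ℝ := (βmax - βmin) / Imax with hΔβdef
    have hΔβ0 : 0 ≤ Δβ := div_nonneg (by linarith) hI0.le
    set κ : ℝ := (γmax - γmin) / Imax with hκdef
    have hκ0 : 0 ≤ κ := div_nonneg (by linarith) hI0.le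
    have hκI : κ * Imax = γmax - γmin := by
      rw [hκdef]
      exact div_mul_cancel₀ _ (ne_of_gt hI0)
    have hΔβI : Δβ * Imax = βmax - βmin := by
      rw [hΔβdef]
      exact div_mul_cancel₀ _ (ne_of_gt hI0)
    set Ka : ℝ := βmax * (Imax + 1) with hKadef
    have hKa0 : 0 < Ka := by
      rw [hKadef]
      nlinarith [hβmin.trans_le hβ]
    set Ca : ℝ := βmin + Δβ * Imax + Δβ with hCadef
    have hCa0 : 0 ≤ Ca := by
      rw [hCadef]
      nlinarith [mul_nonneg hΔβ0 hI0.le]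
    set Kg : ℝ := γmax + κ + γmin with hKgdef
    have hKg0 : 0 < Kg := by
      rw [hKgdef]
      linarith
    set L : ℝ := 1 + ηmax + γmin + κ + Ka + Kg + Ca + Ca * 4 with hLdef
    have hL0 : 0 < L := by
      rw [hLdef]
      linarith
    have hLa : Ca + 1 ≤ L := by
      rw [hLdef]
      linarith
    have hLb : Ka + Ca * 4 + 1 ≤ L := by
      rw [hLdef]
      linarith
    have hLc : ηmax + κ + 1 ≤ L := by
      rw [hLdef]
      linarith
    have hLdd : γmin + 1 ≤ L := by
      rw [hLdef]
      linarith
    have hLe : ηmax + 1 ≤ L := by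
      rw [hLdef]
      linarith
    set B : ℝ := Real.exp (L * (t - t0)) with hBdef
    have hB1 : 1 ≤ B := by
      rw [hBdef]
      rw [show (1:ℝ) = Real.exp 0 from (Real.exp_zero).symm]
      apply Real.exp_le_exp.2
      nlinarith
    have hB0 : 0 < B := by linarith
    have hbeta_eq : ∀ x y : ℝ, betaHat βmin βmax Imax x * y * x = (βmax * x - Δβ * x ^ 2) * y := by
      intro x y
      unfold betaHat
      rw [hΔβdef]
      ring
    have hgamma_eq : ∀ x : ℝ, gammaHat γmin γmax Imax x = γmin + κ * x := by
      intro x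
      unfold gammaHat
      rw [hκdef]
      ring
    have main : ∀ ε : ℝ, 0 < ε → ε * B ≤ 1 →
        0 < S t + ε * B ∧ 0 < E t + ε * B ∧ 0 < I t + ε * B ∧
        0 < 1 + ε * B - (S t + E t + I t) ∧ 0 < Imax + ε * B - I t := by
      intro ε hε hεB
      set w : ℝ → ℝ := fun s => ε * Real.exp (L * (s - t0)) with hwdef
      have hw_pos : ∀ s, 0 < w s := fun s => mul_pos hε (Real.exp_pos _)
      have hw_cont : Continuous w := by
        rw [hwdef]
        exact continuous_const.mul
          (Real.continuous_exp.comp (continuous_const.mul (continuous_id.sub continuous_const)))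
      have hw_t0 : w t0 = ε := by
        rw [hwdef]
        simp
      have hw_le : ∀ s, t0 ≤ s → s ≤ t → w s ≤ 1 := by
        intro s h1 h2
        have hm : Real.exp (L * (s - t0)) ≤ Real.exp (L * (t - t0)) := by
          apply Real.exp_le_exp.2
          nlinarith
        have h3 : w s = ε * Real.exp (L * (s - t0)) := by rw [hwdef]
        have h4 : ε * Real.exp (L * (s - t0)) ≤ ε * B := by
          rw [hBdef]
          nlinarith
        linarith [h3 ▸ h4, hεB]
      have hw_deriv : ∀ s, HasDerivAt w (w s * L) s := by
        intro s
        have h1 : HasDerivAt (fun u : ℝ => L * (u - t0)) L s := by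
          simpa using ((hasDerivAt_id s).sub_const t0).const_mul L
        have h2 := (h1.exp).const_mul ε
        refine h2.congr_deriv ?_
        rw [hwdef]
        ring
      have hwt : w t = ε * B := by rw [hwdef, hBdef]
      have key := barrier_pos5 (fun s => S s + w s) (fun s => E s + w s) (fun s => I s + w s)
        (fun s => 1 + w s - (S s + E s + I s)) (fun s => Imax + w s - I s)
        (hSc.add hw_cont) (hEc.add hw_cont) (hIc.add hw_cont)
        ((continuous_const.add hw_cont).sub ((hSc.add hEc).add hIc))
        ((continuous_const.add hw_cont).sub hIc)
        (by rw [hw_t0]; linarith)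
        (by rw [hw_t0]; linarith)
        (by rw [hw_t0]; linarith)
        (by rw [hw_t0]; linarith)
        (by rw [hw_t0]; linarith)
        ?_ ?_ ?_ ?_ ?_ t ht le_rfl
      · rw [hwt] at key
        exact key
      all_goals intro τ hτ1 hτ2 hzero e0 e1 e2 e3 e4
      all_goals have hτ0 : t0 ≤ τ := hτ1.le
      all_goals have hwτ : 0 < w τ := hw_pos τ
      all_goals have hwτ1 : w τ ≤ 1 := hw_le τ hτ0 hτ2
      all_goals have hIτup : I τ ≤ Imax + w τ := by linarith
      all_goals have hIτlo : -(w τ) ≤ I τ := by linarith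
      all_goals have haL := arith_haL hβmin hΔβ0 hΔβI hCadef hIτlo hIτup hwτ hwτ1
      all_goals have haU := arith_haU (u := I τ) (hβmin.le.trans hβ) hΔβ0 hKadef (by linarith)
      all_goals have hηη := hηmem τ hτ0
      all_goals have hη1 : ηmin ≤ η τ := hηη.1
      all_goals have hη2 : η τ ≤ ηmax := hηη.2
      all_goals have hη0 : 0 < η τ := lt_of_lt_of_le hηmin hη1
      -- case 0 : S-touch
      · have hSτ : S τ = -(w τ) := by linarith
        refine ⟨-(betaHat βmin βmax Imax (I τ) * S τ * I τ) + w τ * L,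
          (hS τ hτ0).add (hw_deriv τ), ?_⟩
        rw [hbeta_eq (I τ) (S τ), hSτ]
        exact arith_case0 hCa0 hLa haL hwτ hwτ1
      -- case 1 : E-touch
      · have hEτ : E τ = -(w τ) := by linarith
        refine ⟨betaHat βmin βmax Imax (I τ) * S τ * I τ - η τ * E τ + w τ * L,
          (hE τ hτ0).add (hw_deriv τ), ?_⟩
        rw [hbeta_eq (I τ) (S τ), hEτ]
        have hSup : S τ ≤ 4 := by linarith
        have hSlo : -(w τ) ≤ S τ := by linarith
        exact arith_case1 hKa0 hCa0 hLb haL haU hSlo hSup hη0.le hwτ hwτ1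
      -- case 2 : I-touch
      · have hIτ : I τ = -(w τ) := by linarith
        refine ⟨η τ * E τ - gammaHat γmin γmax Imax (I τ) * I τ + w τ * L,
          (hI τ hτ0).add (hw_deriv τ), ?_⟩
        rw [hgamma_eq (I τ), hIτ]
        have hEτlo : -(w τ) ≤ E τ := by linarith
        exact arith_case2 hκ0 hγmin.le hηmax0 hLc hη0 hη2 hEτlo hwτ hwτ1
      -- case 3 : sum-touch
      · have hsumτ : S τ + E τ + I τ = 1 + w τ := by linarith
        refine ⟨w τ * L + gammaHat γmin γmax Imax (I τ) * I τ, ?_, ?_⟩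
        · have hd := ((hasDerivAt_const τ (1:ℝ)).add (hw_deriv τ)).sub
            (((hS τ hτ0).add (hE τ hτ0)).add (hI τ hτ0))
          refine hd.congr_deriv ?_
          ring
        · rw [hgamma_eq (I τ)]
          exact arith_case3 hκ0 hγmin.le hLdd hIτlo hwτ
      -- case 4 : Imax-touch
      · have hIτ : I τ = Imax + w τ := by linarith
        refine ⟨w τ * L - (η τ * E τ - gammaHat γmin γmax Imax (I τ) * I τ), ?_, ?_⟩
        · have hd := ((hasDerivAt_const τ Imax).add (hw_deriv τ)).sub (hI τ hτ0)
          refine hd.congr_deriv ?_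
          ring
        · rw [hgamma_eq (I τ), hIτ]
          have hEup : E τ ≤ 1 - Imax + w τ := by linarith
          exact arith_case4 hκ0 hγmin.le hηmax0 hLe hineq hκI hI0 hI1 hη0 hη2 hEup hwτ
    have lim : ∀ x : ℝ, (∀ ε : ℝ, 0 < ε → ε * B ≤ 1 → 0 < x + ε * B) → 0 ≤ x := by
      intro x hx
      by_contra hneg
      push_neg at hneg
      set ε : ℝ := min (1 / B) (-x / (2 * B)) with hεdef
      have hε1 : 0 < ε := lt_min (by positivity) (div_pos (by linarith) (by linarith))
      have hε2 : ε * B ≤ 1 := by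
        have h5 : ε ≤ 1 / B := min_le_left _ _
        have h6 : ε * B ≤ (1 / B) * B := mul_le_mul_of_nonneg_right h5 hB0.le
        have h7 : (1 / B) * B = 1 := by field_simp
        linarith [h7 ▸ h6]
      have h3 := hx ε hε1 hε2
      have h4 : ε * B ≤ -x / 2 := by
        have h5 : ε ≤ -x / (2 * B) := min_le_right _ _
        have h6 : ε * B ≤ (-x / (2 * B)) * B := mul_le_mul_of_nonneg_right h5 hB0.le
        have h7 : (-x / (2 * B)) * B = -x / 2 := by
          field_simp
        linarith [h7 ▸ h6]
      linarith
    have c1 : 0 ≤ S t := lim _ (fun ε h1 h2 => (main ε h1 h2).1)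
    have c2 : 0 ≤ E t := lim _ (fun ε h1 h2 => (main ε h1 h2).2.1)
    have c3 : 0 ≤ I t := lim _ (fun ε h1 h2 => (main ε h1 h2).2.2.1)
    have c4 : 0 ≤ 1 - (S t + E t + I t) :=
      lim _ (fun ε h1 h2 => by linarith [(main ε h1 h2).2.2.2.1])
    have c5 : 0 ≤ Imax - I t :=
      lim _ (fun ε h1 h2 => by linarith [(main ε h1 h2).2.2.2.2])
    exact ⟨c1, c2, c3, by linarith, by linarith⟩
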